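/- There exists a universal constant K > 0 such that for every finite set Λ₀ ⊂ ℝ and every a : Λ₀ → ℂ one has limsup_{L→∞} (1/(2L)²) ∫_{−L}^{L} ∫_{−L}^{L} | ∑_{λ ∈ Λ₀} a_λ e^{i(λ x + λ³ t)} |^4 dx dt ≤ K^4 · ( ∑_{λ ∈ Λ₀} |a_λ|^2 )^2. (Time-averaged L^4 Strichartz estimate for the Airy evolution of Besicovitch almost-periodic data, Theorem 1.2, estimate (1.10).) -/

import Mathlib

open MeasureTheory Filter

noncomputable def ph (θ : ℝ) (x : ℝ) : ℂ := Complex.exp (Complex.I * θ * x)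

lemma ph_cont (θ : ℝ) : Continuous (ph θ) := by
  unfold ph; fun_prop

lemma ph_norm (θ x : ℝ) : ‖ph θ x‖ = 1 := by
  unfold ph
  rw [Complex.norm_exp]
  simp [Complex.mul_re]

lemma integral_ph_zero (L : ℝ) (hL : 0 < L) :
    (∫ x in Set.Icc (-L) L, ph 0 x) = ((2 * L : ℝ) : ℂ) := by
  simp only [ph, Complex.ofReal_zero, mul_zero, zero_mul, Complex.exp_zero]
  rw [setIntegral_const, Real.volume_real_Icc_of_le (by linarith)]
  rw [Complex.real_smul]
  push_cast
  ring

lemma norm_integral_ph_le (θ : ℝ) (hθ : θ ≠ 0) (L : ℝ) (hL : 0 < L) :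
    ‖∫ x in Set.Icc (-L) L, ph θ x‖ ≤ 2 / |θ| := by
  have hc : (Complex.I * θ) ≠ 0 := by
    simp [Complex.ext_iff, hθ]
  have h1 : (∫ x in Set.Icc (-L) L, ph θ x)
      = (Complex.exp (Complex.I * θ * L) - Complex.exp (Complex.I * θ * (-L))) / (Complex.I * θ) := by
    rw [integral_Icc_eq_integral_Ioc, ← intervalIntegral.integral_of_le (by linarith)]
    have := integral_exp_mul_complex (a := -L) (b := L) hc
    simpa [ph, mul_assoc] using this
  rw [h1]
  rw [norm_div]
  have hn : ∀ r : ℝ, ‖Complex.exp (Complex.I * θ * r)‖ = 1 := fun r => ph_norm θ r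
  have h2 : ‖Complex.exp (Complex.I * θ * L) - Complex.exp (Complex.I * θ * (-L))‖ ≤ 2 := by
    calc _ ≤ ‖Complex.exp (Complex.I * θ * L)‖ + ‖Complex.exp (Complex.I * θ * (-L))‖ := norm_sub_le _ _
    _ ≤ 2 := by
        rw [hn L]
        have h := hn (-L); push_cast at h
        rw [h]; norm_num
  have h3 : ‖Complex.I * (θ:ℂ)‖ = |θ| := by
    simp
  rw [h3]
  gcongr

noncomputable def EE (θ : ℝ) (L : ℝ) : ℂ :=
  ((1 / (2 * L) : ℝ) : ℂ) * ∫ x in Set.Icc (-L) L, ph θ x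

lemma tendsto_EE (θ : ℝ) :
    Tendsto (EE θ) atTop (nhds (if θ = 0 then (1:ℂ) else 0)) := by
  by_cases hθ : θ = 0
  · subst hθ
    simp only [if_pos rfl]
    apply Tendsto.congr' (f₁ := fun _ => (1:ℂ))
    · filter_upwards [eventually_gt_atTop (0:ℝ)] with L hL
      rw [EE, integral_ph_zero L hL]
      rw [← Complex.ofReal_mul]
      rw [one_div, inv_mul_cancel₀ (by positivity)]
      norm_num
    · exact tendsto_const_nhds
  · simp only [if_neg hθ]
    rw [tendsto_zero_iff_norm_tendsto_zero]
    apply squeeze_zero' (g := fun L => (1/(2*L)) * (2/|θ|))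
    · filter_upwards with L; positivity
    · filter_upwards [eventually_gt_atTop (0:ℝ)] with L hL
      rw [EE, norm_mul]
      have : ‖((1 / (2 * L) : ℝ) : ℂ)‖ = 1/(2*L) := by
        rw [Complex.norm_real, Real.norm_eq_abs, abs_of_pos (by positivity)]
      rw [this]
      exact mul_le_mul_of_nonneg_left (norm_integral_ph_le θ hθ L hL) (by positivity)
    · have : Tendsto (fun L : ℝ => (1/(2*L))) atTop (nhds 0) := by
        apply Tendsto.comp tendsto_inv_atTop_zero ?_ |>.congr (fun x => by rw [Function.comp, one_div])
        exact tendsto_atTop_add_const_right _ 0 (by simpa using (tendsto_id (α := ℝ)).const_mul_atTop (by norm_num : (0:ℝ) < 2)) |>.congr (by simp)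
      simpa using this.mul_const (2/|θ|)

lemma resonance (l1 m1 l2 m2 : ℝ) (h1 : l1 - m1 + (l2 - m2) = 0)
    (h2 : l1^3 - m1^3 + (l2^3 - m2^3) = 0) :
    (m1 = l1 ∧ m2 = l2) ∨ (m1 = l2 ∧ m2 = l1) ∨ (l2 = -l1 ∧ m2 = -m1) := by
  have hm2 : m2 = l1 + l2 - m1 := by linarith
  subst hm2
  have key : (m1 - l1) * ((m1 - l2) * (l1 + l2)) = 0 := by linear_combination (-1/3) * h2
  rcases mul_eq_zero.mp key with h | h
  · left; constructor <;> [skip; skip] <;> nlinarith [h]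
  · rcases mul_eq_zero.mp h with h' | h'
    · right; left; constructor <;> nlinarith [h']
    · right; right; constructor <;> nlinarith [h']

-- union sum bound helper
lemma sum_union_le {α : Type*} [DecidableEq α] (s t : Finset α) (f : α → ℝ)
    (hf : ∀ a, 0 ≤ f a) : ∑ a ∈ s ∪ t, f a ≤ ∑ a ∈ s, f a + ∑ a ∈ t, f a := by
  rw [← Finset.sum_union_inter]
  have : 0 ≤ ∑ a ∈ s ∩ t, f a := Finset.sum_nonneg fun a _ => hf a
  linarith

open scoped Classical in
lemma resonant_sum_bound (s : Finset ℝ) (a : ℝ → ℂ) :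
    ∑ q ∈ ((s ×ˢ s) ×ˢ (s ×ˢ s)).filter
        (fun q : (ℝ×ℝ)×(ℝ×ℝ) => q.1.1 - q.1.2 + (q.2.1 - q.2.2) = 0 ∧
          q.1.1^3 - q.1.2^3 + (q.2.1^3 - q.2.2^3) = 0),
      ‖a q.1.1‖ * ‖a q.1.2‖ * (‖a q.2.1‖ * ‖a q.2.2‖)
    ≤ 3 * (∑ l ∈ s, ‖a l‖^2)^2 := by
  set B := ∑ l ∈ s, ‖a l‖^2 with hB
  set nf : (ℝ×ℝ)×(ℝ×ℝ) → ℝ :=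
    fun q => ‖a q.1.1‖ * ‖a q.1.2‖ * (‖a q.2.1‖ * ‖a q.2.2‖) with hnf
  have hnf0 : ∀ q, 0 ≤ nf q := fun q => by positivity
  set m1 : ℝ×ℝ → (ℝ×ℝ)×(ℝ×ℝ) := fun p => ((p.1,p.1),(p.2,p.2)) with hm1
  set m2 : ℝ×ℝ → (ℝ×ℝ)×(ℝ×ℝ) := fun p => ((p.1,p.2),(p.2,p.1)) with hm2
  set m3 : ℝ×ℝ → (ℝ×ℝ)×(ℝ×ℝ) := fun p => ((p.1,p.2),(-p.1,-p.2)) with hm3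
  set P := s ×ˢ s with hP
  set P3 := P.filter (fun p => -p.1 ∈ s ∧ -p.2 ∈ s) with hP3
  have hBnn : 0 ≤ B := Finset.sum_nonneg fun l _ => by positivity
  have hsub : ((s ×ˢ s) ×ˢ (s ×ˢ s)).filter
        (fun q : (ℝ×ℝ)×(ℝ×ℝ) => q.1.1 - q.1.2 + (q.2.1 - q.2.2) = 0 ∧
          q.1.1^3 - q.1.2^3 + (q.2.1^3 - q.2.2^3) = 0)
      ⊆ (P.image m1 ∪ P.image m2) ∪ P3.image m3 := by
    intro q hq
    simp only [Finset.mem_filter, Finset.mem_product] at hq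
    obtain ⟨⟨⟨h11, h12⟩, h21, h22⟩, hr1, hr2⟩ := hq
    rcases resonance q.1.1 q.1.2 q.2.1 q.2.2 hr1 hr2 with ⟨e1, e2⟩ | ⟨e1, e2⟩ | ⟨e1, e2⟩
    · apply Finset.mem_union_left; apply Finset.mem_union_left
      apply Finset.mem_image.mpr
      exact ⟨(q.1.1, q.2.1), Finset.mem_product.mpr ⟨h11, h21⟩, by
        simp [hm1, Prod.ext_iff, e1.symm, e2.symm]⟩
    · apply Finset.mem_union_left; apply Finset.mem_union_right
      apply Finset.mem_image.mpr
      exact ⟨(q.1.1, q.1.2), Finset.mem_product.mpr ⟨h11, h12⟩, by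
        simp [hm2, Prod.ext_iff, e1, e2]⟩
    · apply Finset.mem_union_right
      apply Finset.mem_image.mpr
      refine ⟨(q.1.1, q.1.2), ?_, by simp [hm3, Prod.ext_iff, e1.symm, e2.symm]⟩
      refine Finset.mem_filter.mpr ⟨Finset.mem_product.mpr ⟨h11, h12⟩, ?_, ?_⟩
      · rw [← e1]; exact h21
      · rw [← e2]; exact h22
  have step1 := Finset.sum_le_sum_of_subset_of_nonneg hsub (fun q _ _ => hnf0 q)
  have hinj1 : ∀ x ∈ P, ∀ y ∈ P, m1 x = m1 y → x = y := by
    intro x _ y _ h; simp [hm1, Prod.ext_iff] at h; apply Prod.ext <;> tauto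
  have hinj2 : ∀ x ∈ P, ∀ y ∈ P, m2 x = m2 y → x = y := by
    intro x _ y _ h; simp [hm2, Prod.ext_iff] at h; apply Prod.ext <;> tauto
  have hinj3 : ∀ x ∈ P3, ∀ y ∈ P3, m3 x = m3 y → x = y := by
    intro x _ y _ h; simp [hm3, Prod.ext_iff] at h; apply Prod.ext <;> tauto
  have T1 : ∑ q ∈ P.image m1, nf q = B^2 := by
    rw [Finset.sum_image hinj1, hP, Finset.sum_product, hB, sq, Finset.sum_mul_sum]
    apply Finset.sum_congr rfl; intro x _
    apply Finset.sum_congr rfl; intro y _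
    simp only [hnf, hm1]; ring
  have T2 : ∑ q ∈ P.image m2, nf q = B^2 := by
    rw [Finset.sum_image hinj2, hP, Finset.sum_product, hB, sq, Finset.sum_mul_sum]
    apply Finset.sum_congr rfl; intro x _
    apply Finset.sum_congr rfl; intro y _
    simp only [hnf, hm2]; ring
  set s1 := s.filter (fun l => -l ∈ s) with hs1
  set D := ∑ x ∈ s1, ‖a x‖ * ‖a (-x)‖ with hD
  have hDnn : 0 ≤ D := Finset.sum_nonneg fun x _ => by positivity
  have hPP3 : P3 = s1 ×ˢ s1 := by
    ext p
    simp only [hP3, hP, hs1, Finset.mem_filter, Finset.mem_product]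
    tauto
  have T3 : ∑ q ∈ P3.image m3, nf q = D * D := by
    rw [Finset.sum_image hinj3, hPP3, Finset.sum_product, hD, Finset.sum_mul_sum]
    apply Finset.sum_congr rfl; intro x _
    apply Finset.sum_congr rfl; intro y _
    simp only [hnf, hm3]; ring
  have hDB : D ≤ B := by
    have h1 : D ≤ (∑ x ∈ s1, ‖a x‖^2 + ∑ x ∈ s1, ‖a (-x)‖^2)/2 := by
      rw [hD, ← Finset.sum_add_distrib]
      rw [Finset.sum_div]
      apply Finset.sum_le_sum; intro x _
      nlinarith [sq_nonneg (‖a x‖ - ‖a (-x)‖)]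
    have h2 : ∑ x ∈ s1, ‖a x‖^2 ≤ B := by
      apply Finset.sum_le_sum_of_subset_of_nonneg (Finset.filter_subset _ _)
      intro x _ _; positivity
    have h3 : ∑ x ∈ s1, ‖a (-x)‖^2 ≤ B := by
      have hinj : ∀ x ∈ s1, ∀ y ∈ s1, -x = -y → x = y := by
        intro x _ y _ h; linarith
      rw [← Finset.sum_image (g := fun l : ℝ => -l) (f := fun x => ‖a x‖^2) hinj]
      apply Finset.sum_le_sum_of_subset_of_nonneg
      · intro y hy
        obtain ⟨x, hx, rfl⟩ := Finset.mem_image.mp hy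
        exact (Finset.mem_filter.mp hx).2
      · intro x _ _; positivity
    linarith
  have hT3 : ∑ q ∈ P3.image m3, nf q ≤ B^2 := by
    rw [T3, ← sq]
    exact pow_le_pow_left₀ hDnn hDB 2
  calc _ ≤ ∑ q ∈ (P.image m1 ∪ P.image m2) ∪ P3.image m3, nf q := step1
    _ ≤ ∑ q ∈ P.image m1 ∪ P.image m2, nf q + ∑ q ∈ P3.image m3, nf q :=
        sum_union_le _ _ _ hnf0
    _ ≤ (∑ q ∈ P.image m1, nf q + ∑ q ∈ P.image m2, nf q) + ∑ q ∈ P3.image m3, nf q := by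
        have := sum_union_le (P.image m1) (P.image m2) nf hnf0
        linarith
    _ ≤ B^2 + B^2 + B^2 := by rw [T1, T2]; linarith
    _ = 3 * B^2 := by ring

lemma integral_cre {f : ℝ → ℂ} {μ : MeasureTheory.Measure ℝ} (hf : Integrable f μ) :
    ∫ x, (f x).re ∂μ = (∫ x, f x ∂μ).re := by
  have := integral_re hf
  simpa using this

open scoped Classical in
/-- Time-averaged `L⁴` Strichartz estimate for the Airy evolution of
Besicovitch almost-periodic data (Theorem 1.2, estimate (1.10)). -/
theorem averaged_L4_strichartz_airy :
    ∃ K : ℝ, 0 < K ∧ ∀ (Λ₀ : Finset ℝ) (a : ℝ → ℂ),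
      limsup (fun L : ℝ =>
          (1 / (2 * L) ^ 2) * ∫ t in Set.Icc (-L) L, ∫ x in Set.Icc (-L) L,
            ‖∑ lam ∈ Λ₀, a lam *
              Complex.exp (Complex.I * ((lam * x + lam ^ 3 * t : ℝ) : ℂ))‖ ^ 4) atTop
        ≤ K ^ 4 * (∑ lam ∈ Λ₀, ‖a lam‖ ^ 2) ^ 2 := by
  refine ⟨2, by norm_num, ?_⟩
  intro s a
  set B := ∑ l ∈ s, ‖a l‖^2 with hB
  have hBnn : 0 ≤ B := Finset.sum_nonneg fun l _ => by positivity
  set Q := (s ×ˢ s) ×ˢ (s ×ˢ s) with hQ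
  set A : (ℝ×ℝ)×(ℝ×ℝ) → ℝ := fun q => q.1.1 - q.1.2 + (q.2.1 - q.2.2) with hA
  set Bc : (ℝ×ℝ)×(ℝ×ℝ) → ℝ := fun q => q.1.1^3 - q.1.2^3 + (q.2.1^3 - q.2.2^3) with hBc
  set C : (ℝ×ℝ)×(ℝ×ℝ) → ℂ := fun q =>
    a q.1.1 * (starRingEnd ℂ) (a q.1.2) * (a q.2.1 * (starRingEnd ℂ) (a q.2.2)) with hC
  -- basic phase lemmas
  have hmul : ∀ (u v x : ℝ), ph u x * ph v x = ph (u + v) x := by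
    intro u v x; rw [ph, ph, ph, ← Complex.exp_add]; congr 1; push_cast; ring
  have hconj : ∀ (θ x : ℝ), (starRingEnd ℂ) (ph θ x) = ph (-θ) x := by
    intro θ x; rw [ph, ph, ← Complex.exp_conj]; congr 1
    simp [Complex.ext_iff]
  have hsplit : ∀ (l x t : ℝ),
      Complex.exp (Complex.I * ((l * x + l ^ 3 * t : ℝ) : ℂ)) = ph l x * ph (l^3) t := by
    intro l x t; rw [ph, ph, ← Complex.exp_add]; congr 1; push_cast; ring
  have hz : ∀ z : ℂ, (‖z‖:ℝ)^4 = (z * (starRingEnd ℂ) z * (z * (starRingEnd ℂ) z)).re := by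
    intro z
    rw [Complex.mul_conj, ← Complex.ofReal_mul, Complex.ofReal_re, Complex.normSq_eq_norm_sq]
    ring
  -- pointwise identity
  have hpt : ∀ (x t : ℝ),
      (‖∑ lam ∈ s, a lam * Complex.exp (Complex.I * ((lam * x + lam ^ 3 * t : ℝ) : ℂ))‖ ^ 4 : ℝ)
        = (∑ q ∈ Q, C q * ph (A q) x * ph (Bc q) t).re := by
    intro x t
    rw [hz]
    have hzc : (∑ lam ∈ s, a lam * Complex.exp (Complex.I * ((lam * x + lam ^ 3 * t : ℝ) : ℂ)))
        * (starRingEnd ℂ) (∑ lam ∈ s, a lam * Complex.exp (Complex.I * ((lam * x + lam ^ 3 * t : ℝ) : ℂ)))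
        = ∑ p ∈ s ×ˢ s, (a p.1 * (starRingEnd ℂ) (a p.2))
            * (ph (p.1 - p.2) x * ph (p.1^3 - p.2^3) t) := by
      rw [map_sum, Finset.sum_mul_sum, Finset.sum_product]
      apply Finset.sum_congr rfl; intro l _
      apply Finset.sum_congr rfl; intro m _
      simp only [hsplit, map_mul, hconj]
      calc a l * (ph l x * ph (l ^ 3) t) * ((starRingEnd ℂ) (a m) * (ph (-m) x * ph (-(m^3)) t))
          = (a l * (starRingEnd ℂ) (a m)) * ((ph l x * ph (-m) x) * (ph (l^3) t * ph (-(m^3)) t)) := by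
            ring
        _ = _ := by
            rw [hmul, hmul]
            norm_num [sub_eq_add_neg]
    rw [hzc, Finset.sum_mul_sum]
    congr 1
    conv_rhs => rw [hQ, Finset.sum_product]
    apply Finset.sum_congr rfl; intro p1 _
    apply Finset.sum_congr rfl; intro p2 _
    calc (a p1.1 * (starRingEnd ℂ) (a p1.2)) * (ph (p1.1 - p1.2) x * ph (p1.1^3 - p1.2^3) t)
          * ((a p2.1 * (starRingEnd ℂ) (a p2.2)) * (ph (p2.1 - p2.2) x * ph (p2.1^3 - p2.2^3) t))
        = (a p1.1 * (starRingEnd ℂ) (a p1.2) * (a p2.1 * (starRingEnd ℂ) (a p2.2)))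
          * ((ph (p1.1 - p1.2) x * ph (p2.1 - p2.2) x)
            * (ph (p1.1^3 - p1.2^3) t * ph (p2.1^3 - p2.2^3) t)) := by ring
      _ = C (p1, p2) * ph (A (p1, p2)) x * ph (Bc (p1, p2)) t := by
          rw [hmul, hmul, hA, hBc, hC]; ring
  -- the formula for the averaged integral, for L > 0
  have hform : ∀ L : ℝ, 0 < L →
      (1 / (2 * L) ^ 2) * ∫ t in Set.Icc (-L) L, ∫ x in Set.Icc (-L) L,
          ‖∑ lam ∈ s, a lam *
            Complex.exp (Complex.I * ((lam * x + lam ^ 3 * t : ℝ) : ℂ))‖ ^ 4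
        = (∑ q ∈ Q, C q * EE (A q) L * EE (Bc q) L).re := by
    intro L hL
    have hx : ∀ t : ℝ, (∫ x in Set.Icc (-L) L,
        ‖∑ lam ∈ s, a lam *
            Complex.exp (Complex.I * ((lam * x + lam ^ 3 * t : ℝ) : ℂ))‖ ^ 4)
        = (∑ q ∈ Q, (C q * ph (Bc q) t) * ∫ x in Set.Icc (-L) L, ph (A q) x).re := by
      intro t
      simp only [hpt]
      rw [integral_cre (f := fun x => ∑ q ∈ Q, C q * ph (A q) x * ph (Bc q) t) ((continuous_finset_sum _ (fun q _ =>
          (continuous_const.mul (ph_cont (A q))).mul continuous_const)).integrableOn_Icc)]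
      congr 1
      rw [integral_finset_sum _ (f := fun q x => C q * ph (A q) x * ph (Bc q) t) (fun q _ =>
          (((continuous_const.mul (ph_cont (A q))).mul continuous_const).integrableOn_Icc))]
      apply Finset.sum_congr rfl; intro q _
      have : ∀ x : ℝ, C q * ph (A q) x * ph (Bc q) t = (C q * ph (Bc q) t) * ph (A q) x :=
        fun x => by ring
      simp only [this]
      exact integral_const_mul _ _
    simp only [hx]
    rw [integral_cre (f := fun t => ∑ q ∈ Q, (C q * ph (Bc q) t) * ∫ x in Set.Icc (-L) L, ph (A q) x) ((continuous_finset_sum _ (fun q _ =>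
        (continuous_const.mul (ph_cont (Bc q))).mul continuous_const)).integrableOn_Icc)]
    rw [integral_finset_sum _ (f := fun q t => (C q * ph (Bc q) t) * ∫ x in Set.Icc (-L) L, ph (A q) x) (fun q _ =>
        ((continuous_const.mul (ph_cont (Bc q))).mul continuous_const).integrableOn_Icc)]
    have hsum : (∑ q ∈ Q, C q * EE (A q) L * EE (Bc q) L)
          = ((1 / (2 * L) ^ 2 : ℝ) : ℂ)
            * ∑ q ∈ Q, ∫ t in Set.Icc (-L) L, (C q * ph (Bc q) t) * ∫ x in Set.Icc (-L) L, ph (A q) x := by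
      rw [Finset.mul_sum]
      apply Finset.sum_congr rfl; intro q _
      have h1 : ∀ t : ℝ, (C q * ph (Bc q) t) * ∫ x in Set.Icc (-L) L, ph (A q) x
          = (C q * ∫ x in Set.Icc (-L) L, ph (A q) x) * ph (Bc q) t := fun t => by ring
      simp only [h1]
      rw [integral_const_mul, EE, EE]
      push_cast
      ring
    rw [hsum, Complex.re_ofReal_mul]
  -- limit
  set S : ℂ := ∑ q ∈ Q, C q * (if A q = 0 then 1 else 0) * (if Bc q = 0 then 1 else 0) with hS
  have hlim : Tendsto (fun L : ℝ =>
      (1 / (2 * L) ^ 2) * ∫ t in Set.Icc (-L) L, ∫ x in Set.Icc (-L) L,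
          ‖∑ lam ∈ s, a lam *
            Complex.exp (Complex.I * ((lam * x + lam ^ 3 * t : ℝ) : ℂ))‖ ^ 4) atTop
      (nhds S.re) := by
    apply Tendsto.congr' (f₁ := fun L => (∑ q ∈ Q, C q * EE (A q) L * EE (Bc q) L).re)
    · filter_upwards [eventually_gt_atTop (0:ℝ)] with L hL
      exact (hform L hL).symm
    · exact (Complex.continuous_re.tendsto S).comp
        (tendsto_finset_sum _ fun q _ =>
          (tendsto_const_nhds.mul (tendsto_EE (A q))).mul (tendsto_EE (Bc q)))
  rw [hlim.limsup_eq]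
  -- bound S.re
  have hSfilter : S = ∑ q ∈ Q.filter (fun q => A q = 0 ∧ Bc q = 0), C q := by
    rw [Finset.sum_filter]
    apply Finset.sum_congr rfl; intro q _
    by_cases h1 : A q = 0 <;> by_cases h2 : Bc q = 0 <;>
      simp only [h1, h2, if_true, if_false, and_self, and_true, and_false, false_and,
        if_pos, mul_one, mul_zero, eq_self_iff_true, not_true, not_false_iff]
  have hnorm : ‖S‖ ≤ 3 * B^2 := by
    rw [hSfilter]
    calc ‖∑ q ∈ Q.filter (fun q => A q = 0 ∧ Bc q = 0), C q‖
        ≤ ∑ q ∈ Q.filter (fun q => A q = 0 ∧ Bc q = 0), ‖C q‖ := norm_sum_le _ _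
      _ = ∑ q ∈ Q.filter (fun q => A q = 0 ∧ Bc q = 0),
            ‖a q.1.1‖ * ‖a q.1.2‖ * (‖a q.2.1‖ * ‖a q.2.2‖) := by
          apply Finset.sum_congr rfl; intro q _
          simp [hC, norm_mul]
      _ ≤ 3 * B^2 := by
          simp only [hA, hBc, hQ]
          exact resonant_sum_bound s a
  have : S.re ≤ ‖S‖ := Complex.re_le_norm S
  calc S.re ≤ 3 * B^2 := le_trans this hnorm
    _ ≤ (2:ℝ)^4 * B^2 := by nlinarith
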